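/- Let m items be designated 'small' among n items, and place the n items in a uniformly random order. Partition the small items (in their random relative order) into ⌊m/3⌋ groups of three consecutive small items. For a fixed such group, the probability that the three small items of the group appear consecutively in the full random permutation of all n items is m(m−1)/(n(n−1)). -/

import Mathlib

/-- The positions (in increasing order) of the small items (items with label `< m`)
in the arrangement given by the permutation `σ` of `n` items: position `p` holds
item `σ p`. -/
noncomputable def smallPositions (n m : ℕ) (σ : Equiv.Perm (Fin n)) : List ℕ :=
  ((Finset.univ.filter (fun p : Fin n => (σ p : ℕ) < m)).sort (· ≤ ·)).map Fin.val

/-- The `i`-th group of three relatively-consecutive small items (the `(3i+1)`-th,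
`(3i+2)`-th and `(3i+3)`-th small items in order of position) occupies three
consecutive positions of the permutation `σ`. -/
noncomputable def Triplet (n m i : ℕ) (σ : Equiv.Perm (Fin n)) : Prop :=
  (smallPositions n m σ).getD (3 * i + 1) 0 = (smallPositions n m σ).getD (3 * i) 0 + 1 ∧
  (smallPositions n m σ).getD (3 * i + 2) 0 = (smallPositions n m σ).getD (3 * i) 0 + 2


open Finset

namespace TripletAux

/-- Value of an order embedding `Fin m ↪o Fin n` as a totalized `ℕ → ℕ` function. -/
def fv {n m : ℕ} (f : Fin m ↪o Fin n) (j : ℕ) : ℕ :=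
  if h : j < m then (f ⟨j, h⟩ : Fin n).val else n + j

lemma fv_lt {n m : ℕ} (f : Fin m ↪o Fin n) {j : ℕ} (h : j < m) : fv f j < n := by
  rw [fv, dif_pos h]; exact (f _).isLt

lemma fv_strict {n m : ℕ} (f : Fin m ↪o Fin n) {a b : ℕ} (hab : a < b) (hb : b < m) :
    fv f a < fv f b := by
  rw [fv, fv, dif_pos hb, dif_pos (lt_trans hab hb)]
  exact f.strictMono (show (⟨a, lt_trans hab hb⟩ : Fin m) < ⟨b, hb⟩ from hab)

lemma fv_mono {n m : ℕ} (f : Fin m ↪o Fin n) {a b : ℕ} (hab : a ≤ b) (hb : b < m) :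
    fv f a ≤ fv f b := by
  rcases eq_or_lt_of_le hab with rfl | h
  · exact le_rfl
  · exact (fv_strict f h hb).le

lemma fv_ext {n m : ℕ} {f g : Fin m ↪o Fin n} (h : ∀ j, j < m → fv f j = fv g j) : f = g := by
  ext j
  have := h j.val j.isLt
  rw [fv, fv, dif_pos j.isLt, dif_pos j.isLt] at this
  simpa using this

/-- The list of values of a finset of `Fin n`, sorted increasingly. -/
def listOf {n : ℕ} (S : Finset (Fin n)) : List ℕ := (S.sort (· ≤ ·)).map Fin.val

/-- Goodness of a finset: its `3i`-th, `3i+1`-th, `3i+2`-th elements are consecutive. -/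
def Good (i : ℕ) {n : ℕ} (S : Finset (Fin n)) : Prop :=
  (listOf S).getD (3 * i + 1) 0 = (listOf S).getD (3 * i) 0 + 1 ∧
  (listOf S).getD (3 * i + 2) 0 = (listOf S).getD (3 * i) 0 + 2

/-- Goodness of an order embedding. -/
def GoodF (i : ℕ) {n m : ℕ} (f : Fin m ↪o Fin n) : Prop :=
  fv f (3 * i + 1) = fv f (3 * i) + 1 ∧ fv f (3 * i + 2) = fv f (3 * i) + 2

lemma getD_listOf {n m : ℕ} (S : Finset (Fin n)) (h : S.card = m) {j : ℕ} (hj : j < m) :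
    (listOf S).getD j 0 = fv (S.orderEmbOfFin h) j := by
  have hlen : (listOf S).length = m := by
    simp [listOf, Finset.length_sort, h]
  rw [List.getD_eq_getElem _ _ (by omega), fv, dif_pos hj]
  simp only [listOf, List.getElem_map]
  rw [Finset.orderEmbOfFin_apply]
  rfl

lemma good_iff {n m : ℕ} (i : ℕ) (hi : 3 * i + 3 ≤ m) (S : Finset (Fin n)) (h : S.card = m) :
    Good i S ↔ GoodF i (S.orderEmbOfFin h) := by
  rw [Good, GoodF, getD_listOf S h (show 3*i+1 < m by omega),
    getD_listOf S h (show 3*i < m by omega), getD_listOf S h (show 3*i+2 < m by omega)]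

end TripletAux
namespace TripletAux

/-- Expansion of a value function: re-inserts two values after index `3i`. -/
def expandVal (i : ℕ) (G : ℕ → ℕ) (j : ℕ) : ℕ :=
  if j ≤ 3 * i then G j
  else if j ≤ 3 * i + 2 then G (3 * i) + (j - 3 * i)
  else G (j - 2) + 2

/-- Collapse of a value function: removes the values at indices `3i+1`, `3i+2`. -/
def collapseVal (i : ℕ) (F : ℕ → ℕ) (j : ℕ) : ℕ :=
  if j ≤ 3 * i then F j else F (j + 2) - 2

lemma expandVal_low {i : ℕ} (G : ℕ → ℕ) {j : ℕ} (h : j ≤ 3 * i) :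
    expandVal i G j = G j := if_pos h

lemma expandVal_mid {i : ℕ} (G : ℕ → ℕ) {j : ℕ} (h1 : 3 * i < j) (h2 : j ≤ 3 * i + 2) :
    expandVal i G j = G (3 * i) + (j - 3 * i) := by
  rw [expandVal, if_neg (by omega), if_pos h2]

lemma expandVal_high {i : ℕ} (G : ℕ → ℕ) {j : ℕ} (h : 3 * i + 2 < j) :
    expandVal i G j = G (j - 2) + 2 := by
  rw [expandVal, if_neg (by omega), if_neg (by omega)]

lemma collapseVal_low {i : ℕ} (F : ℕ → ℕ) {j : ℕ} (h : j ≤ 3 * i) :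
    collapseVal i F j = F j := if_pos h

lemma collapseVal_high {i : ℕ} (F : ℕ → ℕ) {j : ℕ} (h : 3 * i < j) :
    collapseVal i F j = F (j + 2) - 2 := by
  rw [collapseVal, if_neg (by omega)]

variable {n m i : ℕ}

lemma expandVal_lt (hi : 3 * i + 3 ≤ m) (g : Fin (m - 2) ↪o Fin (n - 2))
    {j : ℕ} (hj : j < m) : expandVal i (fv g) j < n := by
  rcases le_or_gt j (3 * i) with h | h
  · rw [expandVal_low _ h]
    have := fv_lt g (show j < m - 2 by omega); omega
  rcases le_or_gt j (3 * i + 2) with h2 | h2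
  · rw [expandVal_mid _ h h2]
    have := fv_lt g (show 3 * i < m - 2 by omega); omega
  · rw [expandVal_high _ h2]
    have := fv_lt g (show j - 2 < m - 2 by omega); omega

lemma expandVal_strict (hi : 3 * i + 3 ≤ m) (g : Fin (m - 2) ↪o Fin (n - 2))
    {a b : ℕ} (hab : a < b) (hb : b < m) :
    expandVal i (fv g) a < expandVal i (fv g) b := by
  rcases le_or_gt b (3 * i) with hb1 | hb1
  · rw [expandVal_low _ hb1, expandVal_low _ (show a ≤ 3 * i by omega)]
    exact fv_strict g hab (by omega)
  rcases le_or_gt b (3 * i + 2) with hb2 | hb2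
  · rw [expandVal_mid _ hb1 hb2]
    rcases le_or_gt a (3 * i) with ha1 | ha1
    · rw [expandVal_low _ ha1]
      have := fv_mono g ha1 (show 3 * i < m - 2 by omega)
      omega
    · rw [expandVal_mid _ ha1 (by omega)]
      omega
  · rw [expandVal_high _ hb2]
    have hgb := fv_strict g (show 3 * i < b - 2 by omega) (show b - 2 < m - 2 by omega)
    rcases le_or_gt a (3 * i) with ha1 | ha1
    · rw [expandVal_low _ ha1]
      have := fv_mono g ha1 (show 3 * i < m - 2 by omega)
      omega
    rcases le_or_gt a (3 * i + 2) with ha2 | ha2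
    · rw [expandVal_mid _ ha1 ha2]
      omega
    · rw [expandVal_high _ ha2]
      have := fv_strict g (show a - 2 < b - 2 by omega) (show b - 2 < m - 2 by omega)
      omega

/-- The expansion of an order embedding `Fin (m-2) ↪o Fin (n-2)`. -/
def expand (hi : 3 * i + 3 ≤ m) (g : Fin (m - 2) ↪o Fin (n - 2)) : Fin m ↪o Fin n :=
  OrderEmbedding.ofStrictMono
    (fun j => ⟨expandVal i (fv g) j.val, expandVal_lt hi g j.isLt⟩)
    (fun a b hab => by
      simp only [Fin.mk_lt_mk]
      exact expandVal_strict hi g hab b.isLt)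

lemma fv_expand (hi : 3 * i + 3 ≤ m) (g : Fin (m - 2) ↪o Fin (n - 2)) {j : ℕ} (hj : j < m) :
    fv (expand hi g) j = expandVal i (fv g) j := by
  rw [fv, dif_pos hj]; rfl

lemma expand_good (hi : 3 * i + 3 ≤ m) (g : Fin (m - 2) ↪o Fin (n - 2)) :
    GoodF i (expand hi g) := by
  constructor <;>
    rw [fv_expand hi g (by omega), fv_expand hi g (by omega),
      expandVal_low _ le_rfl, expandVal_mid _ (by omega) (by omega)] <;>
    omega

lemma collapseVal_lt (hi : 3 * i + 3 ≤ m) (f : Fin m ↪o Fin n) (hf : GoodF i f)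
    {j : ℕ} (hj : j < m - 2) : collapseVal i (fv f) j < n - 2 := by
  obtain ⟨hf1, hf2⟩ := hf
  rcases le_or_gt j (3 * i) with h | h
  · rw [collapseVal_low _ h]
    have h2 := fv_mono f h (show 3 * i < m by omega)
    have h3 := fv_lt f (show 3 * i + 2 < m by omega)
    omega
  · rw [collapseVal_high _ h]
    have := fv_lt f (show j + 2 < m by omega)
    have h4 := fv_mono f (show 3 * i + 2 ≤ j + 2 by omega) (show j + 2 < m by omega)
    omega

lemma collapseVal_strict (hi : 3 * i + 3 ≤ m) (f : Fin m ↪o Fin n) (hf : GoodF i f)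
    {a b : ℕ} (hab : a < b) (hb : b < m - 2) :
    collapseVal i (fv f) a < collapseVal i (fv f) b := by
  obtain ⟨hf1, hf2⟩ := hf
  rcases le_or_gt b (3 * i) with hb1 | hb1
  · rw [collapseVal_low _ hb1, collapseVal_low _ (by omega)]
    exact fv_strict f hab (by omega)
  · rw [collapseVal_high _ hb1]
    rcases le_or_gt a (3 * i) with ha1 | ha1
    · rw [collapseVal_low _ ha1]
      have h3 := fv_mono f ha1 (show 3 * i < m by omega)
      have h4 := fv_mono f (show 3 * i + 3 ≤ b + 2 by omega) (show b + 2 < m by omega)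
      have h5 := fv_strict f (show 3 * i + 2 < 3 * i + 3 by omega) (show 3 * i + 3 < m by omega)
      omega
    · rw [collapseVal_high _ ha1]
      have h3 := fv_strict f (show a + 2 < b + 2 by omega) (show b + 2 < m by omega)
      have h4 := fv_mono f (show 3 * i + 2 ≤ a + 2 by omega) (show a + 2 < m by omega)
      omega

/-- Collapse of a good order embedding `Fin m ↪o Fin n`. -/
def collapse (hi : 3 * i + 3 ≤ m) (f : Fin m ↪o Fin n) (hf : GoodF i f) :
    Fin (m - 2) ↪o Fin (n - 2) :=
  OrderEmbedding.ofStrictMono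
    (fun j => ⟨collapseVal i (fv f) j.val, collapseVal_lt hi f hf j.isLt⟩)
    (fun a b hab => by
      simp only [Fin.mk_lt_mk]
      exact collapseVal_strict hi f hf hab b.isLt)

lemma fv_collapse (hi : 3 * i + 3 ≤ m) (f : Fin m ↪o Fin n) (hf : GoodF i f) {j : ℕ}
    (hj : j < m - 2) : fv (collapse hi f hf) j = collapseVal i (fv f) j := by
  rw [fv, dif_pos hj]; rfl

/-- The key bijection: good order embeddings `Fin m ↪o Fin n` correspond to arbitrary
order embeddings `Fin (m-2) ↪o Fin (n-2)`. -/
noncomputable def collapseEquiv (hi : 3 * i + 3 ≤ m) :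
    {f : Fin m ↪o Fin n // GoodF i f} ≃ (Fin (m - 2) ↪o Fin (n - 2)) where
  toFun f := collapse hi f.1 f.2
  invFun g := ⟨expand hi g, expand_good hi g⟩
  left_inv f := by
    apply Subtype.ext
    apply fv_ext
    intro j hj
    rw [fv_expand hi _ hj]
    obtain ⟨hf1, hf2⟩ := f.2
    rcases le_or_gt j (3 * i) with h1 | h1
    · rw [expandVal_low _ h1, fv_collapse hi f.1 f.2 (by omega), collapseVal_low _ h1]
    rcases le_or_gt j (3 * i + 2) with h2 | h2
    · rw [expandVal_mid _ h1 h2, fv_collapse hi f.1 f.2 (by omega), collapseVal_low _ le_rfl]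
      rcases (show j = 3 * i + 1 ∨ j = 3 * i + 2 by omega) with rfl | rfl <;> omega
    · rw [expandVal_high _ h2, fv_collapse hi f.1 f.2 (by omega), collapseVal_high _ (by omega)]
      have h4 := fv_mono f.1 (show 3 * i + 2 ≤ j - 2 + 2 by omega) (show j - 2 + 2 < m by omega)
      have hjj : j - 2 + 2 = j := by omega
      rw [hjj] at h4 ⊢
      omega
  right_inv g := by
    apply fv_ext
    intro j hj
    rw [fv_collapse hi _ _ (by omega)]
    rcases le_or_gt j (3 * i) with h1 | h1
    · rw [collapseVal_low _ h1, fv_expand hi g (by omega), expandVal_low _ h1]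
    · rw [collapseVal_high _ h1, fv_expand hi g (by omega), expandVal_high _ (by omega)]
      have hjj : j + 2 - 2 = j := by omega
      rw [hjj]
      omega

end TripletAux
namespace TripletAux

/-- Order embeddings `Fin a ↪o Fin b` correspond to `a`-element subsets of `Fin b`. -/
noncomputable def embFinsetEquiv (a b : ℕ) :
    (Fin a ↪o Fin b) ≃ {T : Finset (Fin b) // T.card = a} where
  toFun f := ⟨Finset.univ.map f.toEmbedding, by simp⟩
  invFun T := T.1.orderEmbOfFin T.2
  left_inv f := by
    refine (Finset.orderEmbOfFin_unique' _ (fun x => ?_)).symm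
    exact Finset.mem_map_of_mem _ (Finset.mem_univ x)
  right_inv T := by
    apply Subtype.ext
    ext x
    simp only [Finset.mem_map, Finset.mem_univ, true_and, RelEmbedding.coe_toEmbedding]
    constructor
    · rintro ⟨y, rfl⟩
      exact Finset.orderEmbOfFin_mem _ _ _
    · intro hx
      have : x ∈ Set.range (T.1.orderEmbOfFin T.2) := by
        rw [Finset.range_orderEmbOfFin]; exact hx
      obtain ⟨y, hy⟩ := this
      exact ⟨y, hy⟩

/-- Restriction of a permutation mapping predicate `p` onto predicate `q`. -/
def restrictEquiv {α : Type*} {p q : α → Prop} (σ : Equiv.Perm α) (h : ∀ x, p x ↔ q (σ x)) :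
    {x // p x} ≃ {x // q x} where
  toFun x := ⟨σ x.1, (h x.1).1 x.2⟩
  invFun y := ⟨σ.symm y.1, (h _).2 (by rw [Equiv.apply_symm_apply]; exact y.2)⟩
  left_inv x := by ext; simp
  right_inv y := by ext; simp

/-- Permutations mapping `p` onto `q` correspond to pairs of bijections. -/
def fiberEquiv {α : Type*} (p q : α → Prop) [DecidablePred p] [DecidablePred q] :
    {σ : Equiv.Perm α // ∀ x, p x ↔ q (σ x)} ≃
      (({x // p x} ≃ {x // q x}) × ({x // ¬p x} ≃ {x // ¬q x})) where
  toFun s := (restrictEquiv s.1 s.2, restrictEquiv s.1 (fun x => not_congr (s.2 x)))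
  invFun e := ⟨(Equiv.sumCompl p).symm.trans ((e.1.sumCongr e.2).trans (Equiv.sumCompl q)), by
    intro x
    by_cases hx : p x
    · simp only [Equiv.trans_apply, Equiv.sumCompl_symm_apply_of_pos hx,
        Equiv.sumCongr_apply, Sum.map_inl, Equiv.sumCompl_apply_inl]
      exact iff_of_true hx (e.1 ⟨x, hx⟩).2
    · simp only [Equiv.trans_apply, Equiv.sumCompl_symm_apply_of_neg hx,
        Equiv.sumCongr_apply, Sum.map_inr, Equiv.sumCompl_apply_inr]
      exact iff_of_false hx (e.2 ⟨x, hx⟩).2⟩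
  left_inv s := by
    apply Subtype.ext
    ext x
    by_cases hx : p x
    · simp [Equiv.sumCompl_symm_apply_of_pos hx, restrictEquiv]
    · simp [Equiv.sumCompl_symm_apply_of_neg hx, restrictEquiv]
  right_inv e := by
    have h1 : ∀ x : {x // p x}, ((Equiv.sumCompl p).symm.trans
        ((e.1.sumCongr e.2).trans (Equiv.sumCompl q))) x.1 = (e.1 x).1 := by
      intro x
      simp [Equiv.sumCompl_symm_apply_of_pos x.2]
    have h2 : ∀ x : {x // ¬p x}, ((Equiv.sumCompl p).symm.trans
        ((e.1.sumCongr e.2).trans (Equiv.sumCompl q))) x.1 = (e.2 x).1 := by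
      intro x
      simp [Equiv.sumCompl_symm_apply_of_neg x.2]
    refine Prod.ext ?_ ?_
    · apply Equiv.ext
      intro x
      apply Subtype.ext
      exact h1 x
    · apply Equiv.ext
      intro x
      apply Subtype.ext
      exact h2 x

end TripletAux
namespace TripletAux

/-- The set of positions of small items. -/
def F (n m : ℕ) (σ : Equiv.Perm (Fin n)) : Finset (Fin n) :=
  Finset.univ.filter (fun p : Fin n => (σ p : ℕ) < m)

variable {n m i : ℕ}

instance {n i : ℕ} (S : Finset (Fin n)) : Decidable (Good i S) :=
  inferInstanceAs (Decidable (_ ∧ _))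

lemma card_small (hmn : m ≤ n) :
    (Finset.univ.filter fun x : Fin n => (x : ℕ) < m).card = m := by
  rw [← Fintype.card_subtype]
  have e : {x : Fin n // (x : ℕ) < m} ≃ Fin m :=
    ⟨fun x => ⟨x.1.1, x.2⟩, fun j => ⟨⟨j.1, lt_of_lt_of_le j.2 hmn⟩, j.2⟩,
      fun x => by ext; rfl, fun j => by ext; rfl⟩
  rw [Fintype.card_congr e, Fintype.card_fin]

lemma card_F (hmn : m ≤ n) (σ : Equiv.Perm (Fin n)) : (F n m σ).card = m := by
  classical
  have h : F n m σ = (Finset.univ.filter fun x : Fin n => (x : ℕ) < m).image σ.symm := by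
    ext p
    simp only [F, Finset.mem_filter, Finset.mem_univ, true_and, Finset.mem_image]
    constructor
    · intro h
      exact ⟨σ p, h, σ.symm_apply_apply p⟩
    · rintro ⟨x, hx, rfl⟩
      rwa [σ.apply_symm_apply]
  rw [h, Finset.card_image_of_injective _ σ.symm.injective, card_small hmn]

lemma card_goodSets (hmn : m ≤ n) (hi : 3 * i + 3 ≤ m) :
    (Finset.univ.filter fun S : Finset (Fin n) => S.card = m ∧ Good i S).card =
      (n - 2).choose (m - 2) := by
  classical
  rw [← Fintype.card_subtype]
  have e1 : {S : Finset (Fin n) // S.card = m ∧ Good i S} ≃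
      {x : {T : Finset (Fin n) // T.card = m} // Good i x.1} :=
    (Equiv.subtypeSubtypeEquivSubtypeInter _ _).symm
  have e2 : {x : {T : Finset (Fin n) // T.card = m} // Good i x.1} ≃
      {f : Fin m ↪o Fin n // GoodF i f} :=
    Equiv.subtypeEquiv (embFinsetEquiv m n).symm (fun T => good_iff i hi T.1 T.2)
  have e4 : (Fin (m - 2) ↪o Fin (n - 2)) ≃ {T : Finset (Fin (n - 2)) // T.card = m - 2} :=
    embFinsetEquiv _ _
  rw [Fintype.card_congr (((e1.trans e2).trans (collapseEquiv hi)).trans e4),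
    Fintype.card_finset_len, Fintype.card_fin]

lemma card_fiber (hmn : m ≤ n) (S : Finset (Fin n)) (hS : S.card = m) :
    (Finset.univ.filter fun σ : Equiv.Perm (Fin n) => F n m σ = S).card =
      m.factorial * (n - m).factorial := by
  classical
  rw [← Fintype.card_subtype]
  have hiff : ∀ σ : Equiv.Perm (Fin n), F n m σ = S ↔ ∀ x, x ∈ S ↔ ((σ x : ℕ) < m) := by
    intro σ
    simp only [F, Finset.ext_iff, Finset.mem_filter, Finset.mem_univ, true_and]
    exact ⟨fun h x => (h x).symm, fun h x => (h x).symm⟩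
  have e : {σ : Equiv.Perm (Fin n) // F n m σ = S} ≃
      (({x : Fin n // x ∈ S} ≃ {x : Fin n // (x : ℕ) < m}) ×
        ({x : Fin n // ¬x ∈ S} ≃ {x : Fin n // ¬(x : ℕ) < m})) :=
    (Equiv.subtypeEquivRight hiff).trans (fiberEquiv (fun x : Fin n => x ∈ S) (fun x : Fin n => (x : ℕ) < m))
  have cardS : Fintype.card {x : Fin n // x ∈ S} = m := by
    simp [hS]
  have cardB : Fintype.card {x : Fin n // (x : ℕ) < m} = m := by
    rw [Fintype.card_subtype, card_small hmn]
  have cardSc : Fintype.card {x : Fin n // ¬x ∈ S} = n - m := by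
    rw [Fintype.card_subtype_compl, cardS, Fintype.card_fin]
  have cardBc : Fintype.card {x : Fin n // ¬(x : ℕ) < m} = n - m := by
    rw [Fintype.card_subtype_compl, cardB, Fintype.card_fin]
  rw [Fintype.card_congr e, Fintype.card_prod,
    Fintype.card_equiv (Fintype.equivOfCardEq (cardS.trans cardB.symm)),
    Fintype.card_equiv (Fintype.equivOfCardEq (cardSc.trans cardBc.symm)), cardS, cardSc]

end TripletAux
namespace TripletAux

lemma smallPositions_eq (n m : ℕ) (σ : Equiv.Perm (Fin n)) :
    smallPositions n m σ = listOf (F n m σ) := rfl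

lemma triplet_iff_good (n m i : ℕ) (σ : Equiv.Perm (Fin n)) :
    Triplet n m i σ ↔ Good i (F n m σ) := Iff.rfl

noncomputable instance (n m i : ℕ) (σ : Equiv.Perm (Fin n)) : Decidable (Triplet n m i σ) :=
  inferInstanceAs (Decidable (_ ∧ _))

lemma count_triplet {n m i : ℕ} (hmn : m ≤ n) (hi : 3 * i + 3 ≤ m) :
    Nat.card {σ : Equiv.Perm (Fin n) // Triplet n m i σ} =
      (n - 2).choose (m - 2) * (m.factorial * (n - m).factorial) := by
  classical
  rw [Nat.card_eq_fintype_card, Fintype.card_subtype]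
  rw [Finset.card_eq_sum_card_fiberwise (f := F n m)
    (t := Finset.univ.filter fun S : Finset (Fin n) => S.card = m ∧ Good i S)
    (fun σ hσ => by
      simp only [Finset.coe_filter, Set.mem_setOf_eq, Finset.mem_filter, Finset.mem_univ, true_and] at hσ ⊢
      exact ⟨card_F hmn σ, (triplet_iff_good n m i σ).1 hσ⟩)]
  have hterm : ∀ S ∈ Finset.univ.filter fun S : Finset (Fin n) => S.card = m ∧ Good i S,
      ((Finset.univ.filter fun σ : Equiv.Perm (Fin n) => Triplet n m i σ).filter
        fun σ => F n m σ = S).card = m.factorial * (n - m).factorial := by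
    intro S hS
    simp only [Finset.mem_filter, Finset.mem_univ, true_and] at hS
    rw [Finset.filter_filter]
    have heq : (Finset.univ.filter fun σ : Equiv.Perm (Fin n) => Triplet n m i σ ∧ F n m σ = S)
        = Finset.univ.filter fun σ => F n m σ = S := by
      ext σ
      simp only [Finset.mem_filter, Finset.mem_univ, true_and]
      refine ⟨fun h => h.2, fun h => ⟨?_, h⟩⟩
      rw [triplet_iff_good, h]
      exact hS.2
    rw [heq, card_fiber hmn S hS.1]
  rw [Finset.sum_congr rfl hterm, Finset.sum_const, card_goodSets hmn hi, smul_eq_mul]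

lemma natid {n m : ℕ} (hmn : m ≤ n) (hm : 3 ≤ m) :
    (n - 2).choose (m - 2) * (m.factorial * (n - m).factorial) * (n * (n - 1)) =
      (m * (m - 1)) * n.factorial := by
  obtain ⟨a, rfl⟩ : ∃ a, m = a + 3 := ⟨m - 3, by omega⟩
  obtain ⟨b, rfl⟩ : ∃ b, n = a + 3 + b := ⟨n - (a + 3), by omega⟩
  rw [show a + 3 - 2 = a + 1 by omega, show a + 3 + b - 2 = a + 1 + b by omega,
    show a + 3 + b - (a + 3) = b by omega, show a + 3 + b - 1 = a + 2 + b by omega,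
    show a + 3 - 1 = a + 2 by omega]
  have e1 : (a + 1 + b).choose (a + 1) * (a + 1).factorial * b.factorial
      = (a + 1 + b).factorial := by
    have h := Nat.choose_mul_factorial_mul_factorial (show a + 1 ≤ a + 1 + b by omega)
    rwa [show a + 1 + b - (a + 1) = b by omega] at h
  have e2 : (a + 3).factorial = (a + 3) * ((a + 2) * (a + 1).factorial) := by
    rw [show a + 3 = (a + 2) + 1 by omega, Nat.factorial_succ,
      show a + 2 = (a + 1) + 1 by omega, Nat.factorial_succ]
  have e3 : (a + 3 + b).factorial = (a + 3 + b) * ((a + 2 + b) * (a + 1 + b).factorial) := by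
    rw [show a + 3 + b = (a + 2 + b) + 1 by omega, Nat.factorial_succ,
      show a + 2 + b = (a + 1 + b) + 1 by omega, Nat.factorial_succ]
  rw [e2, e3, ← e1]
  ring

end TripletAux

theorem triplet_probability (n m i : ℕ) (hmn : m ≤ n) (hi : 3 * i + 3 ≤ m) :
    (Nat.card {σ : Equiv.Perm (Fin n) // Triplet n m i σ} : ℝ) /
        (Nat.card (Equiv.Perm (Fin n)) : ℝ) =
      ((m : ℝ) * ((m : ℝ) - 1)) / ((n : ℝ) * ((n : ℝ) - 1)) := by
  have hm : 3 ≤ m := by omega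
  have hn : 3 ≤ n := by omega
  have htot : Nat.card (Equiv.Perm (Fin n)) = n.factorial := by
    rw [Nat.card_eq_fintype_card, Fintype.card_perm, Fintype.card_fin]
  rw [TripletAux.count_triplet hmn hi, htot]
  have hm1 : ((m : ℝ) - 1) = ((m - 1 : ℕ) : ℝ) := by
    rw [Nat.cast_sub (by omega), Nat.cast_one]
  have hn1 : ((n : ℝ) - 1) = ((n - 1 : ℕ) : ℝ) := by
    rw [Nat.cast_sub (by omega), Nat.cast_one]
  have hfac : ((n.factorial : ℕ) : ℝ) ≠ 0 := Nat.cast_ne_zero.mpr n.factorial_ne_zero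
  have hpos : ((n : ℝ) * ((n - 1 : ℕ) : ℝ)) ≠ 0 := by
    have h : 0 < n * (n - 1) := Nat.mul_pos (by omega) (by omega)
    have : ((n * (n - 1) : ℕ) : ℝ) ≠ 0 := Nat.cast_ne_zero.mpr h.ne'
    rwa [Nat.cast_mul] at this
  rw [hm1, hn1, div_eq_div_iff hfac hpos]
  exact_mod_cast TripletAux.natid hmn hm
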